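/- Let n be a positive integer and let Z be an n×n lower unitriangular matrix over a field (lower triangular with all diagonal entries 1), and let P be a permutation matrix such that P·Z·P⁻¹ is upper unitriangular. Then Z is uniquely determined by A = Z⁻¹·P·Z in the following sense: if Z' is another lower unitriangular matrix with P'·Z'·P'⁻¹ upper unitriangular for some permutation matrix P', and Z'⁻¹·P'·Z' = A, then P' = P and Z' = Z. -/

import Mathlib

open Matrix Finset OrderDual

/-- Uniqueness of the Bruhat-type decomposition: a lower unitriangular matrix `Z`
with `P·Z·P⁻¹` upper unitriangular is uniquely determined by `A = Z⁻¹·P·Z`. -/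
theorem bruhat_uniqueness {n : ℕ} {K : Type*} [Field K]
    (Z Z' : Matrix (Fin n) (Fin n) K) (σ σ' : Equiv.Perm (Fin n))
    (hZlow : ∀ i j : Fin n, i < j → Z i j = 0) (hZdiag : ∀ i, Z i i = 1)
    (hZ'low : ∀ i j : Fin n, i < j → Z' i j = 0) (hZ'diag : ∀ i, Z' i i = 1)
    (hUp : ∀ i j : Fin n, j < i →
      (σ.permMatrix K * Z * (σ⁻¹).permMatrix K) i j = 0)
    (hUpd : ∀ i, (σ.permMatrix K * Z * (σ⁻¹).permMatrix K) i i = 1)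
    (hUp' : ∀ i j : Fin n, j < i →
      (σ'.permMatrix K * Z' * (σ'⁻¹).permMatrix K) i j = 0)
    (hUpd' : ∀ i, (σ'.permMatrix K * Z' * (σ'⁻¹).permMatrix K) i i = 1)
    (hA : Z'⁻¹ * σ'.permMatrix K * Z' = Z⁻¹ * σ.permMatrix K * Z) :
    σ' = σ ∧ Z' = Z := by
  classical
  -- entry formula for conjugation by a permutation matrix
  have hentry : ∀ (W : Matrix (Fin n) (Fin n) K) (τ : Equiv.Perm (Fin n)) (i j : Fin n),
      (τ.permMatrix K * W * (τ⁻¹).permMatrix K) i j = W (τ i) (τ j) := by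
    intro W τ i j
    rw [show τ.permMatrix K * W * (τ⁻¹).permMatrix K
        = (τ.toPEquiv.toMatrix * W) * (τ⁻¹).toPEquiv.toMatrix from rfl,
      PEquiv.toMatrix_toPEquiv_mul, PEquiv.mul_toMatrix_toPEquiv]
    simp [Equiv.Perm.inv_def]
  -- block triangularity facts
  have hZ1 : Z.BlockTriangular (toDual : Fin n → (Fin n)ᵒᵈ) := fun i j h => hZlow i j h
  have hZ'1 : Z'.BlockTriangular (toDual : Fin n → (Fin n)ᵒᵈ) := fun i j h => hZ'low i j h
  have hZ2 : Z.BlockTriangular (fun a => σ⁻¹ a) := by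
    intro a b h
    have := hUp (σ⁻¹ a) (σ⁻¹ b) h
    rw [hentry] at this
    simpa using this
  have hZ'2 : Z'.BlockTriangular (fun a => σ'⁻¹ a) := by
    intro a b h
    have := hUp' (σ'⁻¹ a) (σ'⁻¹ b) h
    rw [hentry] at this
    simpa using this
  -- invertibility
  have hdZ : IsUnit Z.det := by
    rw [Matrix.det_of_lowerTriangular Z hZ1]
    simp [hZdiag]
  have hdZ' : IsUnit Z'.det := by
    rw [Matrix.det_of_lowerTriangular Z' hZ'1]
    simp [hZ'diag]
  haveI : Invertible Z := Z.invertibleOfIsUnitDet hdZ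
  haveI : Invertible Z' := Z'.invertibleOfIsUnitDet hdZ'
  have hZi1 : Z⁻¹.BlockTriangular (toDual : Fin n → (Fin n)ᵒᵈ) :=
    blockTriangular_inv_of_blockTriangular hZ1
  have hZi2 : Z⁻¹.BlockTriangular (fun a => σ⁻¹ a) :=
    blockTriangular_inv_of_blockTriangular hZ2
  set Y := Z' * Z⁻¹ with hYdef
  have hY1 : Y.BlockTriangular (toDual : Fin n → (Fin n)ᵒᵈ) := hZ'1.mul hZi1
  -- diagonal of Z⁻¹ is 1
  have hZidiag : ∀ a, Z⁻¹ a a = 1 := by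
    intro a
    have h1 : (Z * Z⁻¹) a a = 1 := by rw [Matrix.mul_nonsing_inv Z hdZ]; simp
    rw [Matrix.mul_apply] at h1
    rw [Finset.sum_eq_single a] at h1
    · rw [hZdiag a, one_mul] at h1; exact h1
    · intro c _ hc
      rcases lt_or_gt_of_ne hc with h | h
      · rw [hZi1 (show (toDual a : (Fin n)ᵒᵈ) < toDual c from h), mul_zero]
      · rw [hZlow a c h, zero_mul]
    · intro h; exact absurd (mem_univ a) h
  -- diagonal of Y is 1
  have hYdiag : ∀ a, Y a a = 1 := by
    intro a
    rw [hYdef, Matrix.mul_apply]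
    rw [Finset.sum_eq_single a]
    · rw [hZ'diag a, hZidiag a, one_mul]
    · intro c _ hc
      rcases lt_or_gt_of_ne hc with h | h
      · rw [hZi1 (show (toDual a : (Fin n)ᵒᵈ) < toDual c from h), mul_zero]
      · rw [hZ'low a c h, zero_mul]
    · intro h; exact absurd (mem_univ a) h
  -- commutation relation
  have hcomm : σ'.permMatrix K * Y = Y * σ.permMatrix K := by
    have h := congrArg (fun M => Z' * M * Z⁻¹) hA
    rw [show Z' * (Z'⁻¹ * σ'.permMatrix K * Z') * Z⁻¹
        = Z' * (Z'⁻¹ * (σ'.permMatrix K * (Z' * Z⁻¹))) from by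
          simp only [Matrix.mul_assoc],
      Matrix.mul_nonsing_inv_cancel_left Z' _ hdZ'] at h
    rw [show Z' * (Z⁻¹ * σ.permMatrix K * Z) * Z⁻¹
        = (Z' * Z⁻¹) * (σ.permMatrix K * (Z * Z⁻¹)) from by
          simp only [Matrix.mul_assoc],
      Matrix.mul_nonsing_inv Z hdZ, Matrix.mul_one] at h
    exact h
  -- entrywise version
  have hkey : ∀ i j : Fin n, Y (σ' i) j = Y i (σ⁻¹ j) := by
    intro i j
    have h := congrFun (congrFun hcomm i) j
    rw [show σ'.permMatrix K * Y = σ'.toPEquiv.toMatrix * Y from rfl,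
      PEquiv.toMatrix_toPEquiv_mul,
      show Y * σ.permMatrix K = Y * σ.toPEquiv.toMatrix from rfl,
      PEquiv.mul_toMatrix_toPEquiv] at h
    simpa using h
  -- first conclusion: σ' = σ
  have hle : ∀ i, σ i ≤ σ' i := by
    intro i
    by_contra h
    push_neg at h
    have h0 : Y (σ' i) (σ i) = 0 :=
      hY1 (show (toDual (σ i) : (Fin n)ᵒᵈ) < toDual (σ' i) from h)
    rw [hkey i (σ i)] at h0
    simp only [Equiv.Perm.coe_inv, Equiv.symm_apply_apply] at h0
    rw [hYdiag i] at h0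
    exact one_ne_zero h0
  have hσ : σ' = σ := by
    have hsum : ∑ i, ((σ i : ℕ)) = ∑ i, ((σ' i : ℕ)) := by
      rw [Equiv.sum_comp σ (fun i : Fin n => (i : ℕ)), Equiv.sum_comp σ' (fun i : Fin n => (i : ℕ))]
    have := (Finset.sum_eq_sum_iff_of_le (fun i _ => Fin.le_iff_val_le_val.1 (hle i))).1 hsum
    exact Equiv.ext fun i => Fin.val_injective (this i (mem_univ i)).symm
  subst hσ
  refine ⟨rfl, ?_⟩
  -- now σ' has been replaced by σ' everywhere? (subst replaced σ by σ')
  have hY2 : Y.BlockTriangular (fun a => σ'⁻¹ a) := hZ'2.mul hZi2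
  have hYone : Y = 1 := by
    ext a b
    rcases eq_or_ne a b with rfl | hab
    · rw [hYdiag a, Matrix.one_apply_eq]
    · rw [Matrix.one_apply_ne hab]
      by_contra hne
      have h1 : ¬ a < b := fun h => hne (hY1 (show (toDual b : (Fin n)ᵒᵈ) < toDual a from h))
      have h2 : ¬ (σ'⁻¹ b : Fin n) < σ'⁻¹ a := fun h => hne (hY2 h)
      have he : Y a b = Y (σ'⁻¹ a) (σ'⁻¹ b) := by
        have := hkey (σ'⁻¹ a) b
        simpa using this
      have h3 : ¬ (σ'⁻¹ a : Fin n) < σ'⁻¹ b := by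
        intro h
        exact hne (he.trans (hY1 (show (toDual (σ'⁻¹ b) : (Fin n)ᵒᵈ) < toDual (σ'⁻¹ a) from h)))
      have : (σ'⁻¹ a : Fin n) = σ'⁻¹ b := le_antisymm (not_lt.1 h2) (not_lt.1 h3)
      exact hab (σ'⁻¹.injective this)
  have : Z' * Z⁻¹ * Z = Z := by rw [← hYdef, hYone, Matrix.one_mul]
  rwa [Matrix.nonsing_inv_mul_cancel_right Z Z' hdZ] at this
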